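/- Let X be a random vector in ℝⁿ distributed as the multivariate Gaussian with mean Fβ (for some β ∈ ℝᵏ) and covariance matrix Σ = σ₀²I_n + VDV'. Then for each j ∈ {1,…,l}, the variance of the BLUP natural estimator ((T̂X)ⱼ)² equals 2(σⱼ² − σ₀²(Ŵ⁻¹)ⱼⱼ)². -/

import Mathlib

open Matrix MeasureTheory ProbabilityTheory

open Real
open scoped NNReal ENNReal

lemma int_pow_gauss {b : ℝ} (hb : 0 < b) (p : ℕ) :
    Integrable (fun x : ℝ => x ^ p * rexp (-b * x ^ 2)) := by
  have h := integrable_rpow_mul_exp_neg_mul_sq hb (s := (p : ℝ)) (by exact_mod_cast neg_one_lt_zero.trans_le (Nat.cast_nonneg p))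
  simpa [Real.rpow_natCast] using h

lemma gauss_rec {b : ℝ} (hb : 0 < b) (m : ℕ) :
    (2 * b) * ∫ x : ℝ, x ^ (m + 2) * rexp (-b * x ^ 2)
      = (m + 1 : ℝ) * ∫ x : ℝ, x ^ m * rexp (-b * x ^ 2) := by
  set f : ℝ → ℝ := fun x => x ^ (m + 1) * rexp (-b * x ^ 2) with hf
  set f' : ℝ → ℝ := fun x =>
    (m + 1 : ℝ) * (x ^ m * rexp (-b * x ^ 2)) - (2 * b) * (x ^ (m + 2) * rexp (-b * x ^ 2)) with hf'
  have hderiv : ∀ x : ℝ, HasDerivAt f (f' x) x := by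
    intro x
    have h1 : HasDerivAt (fun x : ℝ => x ^ (m + 1)) ((m + 1 : ℝ) * x ^ m) x := by
      simpa using hasDerivAt_pow (m + 1) x
    have h2 : HasDerivAt (fun x : ℝ => rexp (-b * x ^ 2)) (rexp (-b * x ^ 2) * (-b * (2 * x))) x := by
      have hin : HasDerivAt (fun x : ℝ => -b * x ^ 2) (-b * (2 * x)) x := by
        simpa using (hasDerivAt_pow 2 x).const_mul (-b)
      exact hin.exp
    have := h1.mul h2
    refine this.congr_deriv ?_
    simp only [hf']
    ring
  have hint : Integrable f := int_pow_gauss hb (m + 1)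
  have hint' : Integrable f' :=
    ((int_pow_gauss hb m).const_mul _).sub ((int_pow_gauss hb (m + 2)).const_mul _)
  have h0 : ∫ x, f' x = 0 :=
    integral_eq_zero_of_hasDerivAt_of_integrable hderiv hint' hint
  rw [hf'] at h0
  rw [integral_sub ((int_pow_gauss hb m).const_mul _) ((int_pow_gauss hb (m + 2)).const_mul _),
    MeasureTheory.integral_const_mul, MeasureTheory.integral_const_mul, sub_eq_zero] at h0
  linarith [h0]

lemma pdf_eq (v : ℝ≥0) (x : ℝ) :
    gaussianPDFReal 0 v x = (√(2 * π * v))⁻¹ * rexp (-(2 * (v:ℝ))⁻¹ * x ^ 2) := by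
  rw [gaussianPDFReal]
  congr 1
  rw [sub_zero]
  rcases eq_or_ne (v:ℝ) 0 with h|h
  · simp [h]
  · field_simp

lemma integral_gaussianReal_eq {v : ℝ≥0} (hv : v ≠ 0) (g : ℝ → ℝ) :
    ∫ x, g x ∂(gaussianReal 0 v) = ∫ x, gaussianPDFReal 0 v x * g x := by
  rw [gaussianReal_of_var_ne_zero _ hv]
  have hmeas : Measurable fun x => (gaussianPDFReal 0 v x).toNNReal :=
    (measurable_gaussianPDFReal 0 v).real_toNNReal
  have : (volume : Measure ℝ).withDensity (gaussianPDF 0 v)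
      = (volume : Measure ℝ).withDensity (fun x => ((gaussianPDFReal 0 v x).toNNReal : ℝ≥0∞)) := rfl
  rw [this, integral_withDensity_eq_integral_smul hmeas]
  congr 1
  ext x
  simp [NNReal.smul_def, Real.coe_toNNReal _ (gaussianPDFReal_nonneg 0 v x)]

lemma integrable_pow_gaussianReal (v : ℝ≥0) (p : ℕ) :
    Integrable (fun x : ℝ => x ^ p) (gaussianReal 0 v) := by
  by_cases hv : v = 0
  · rw [hv, gaussianReal_zero_var]
    exact (integrable_const ((0:ℝ)^p)).congr (ae_eq_dirac (fun x : ℝ => x ^ p)).symm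
  have hv0 : (0:ℝ) < v := lt_of_le_of_ne v.coe_nonneg (by exact_mod_cast Ne.symm hv)
  have hb : (0:ℝ) < (2 * (v:ℝ))⁻¹ := by positivity
  rw [gaussianReal_of_var_ne_zero _ hv]
  have hmeas : Measurable fun x => (gaussianPDFReal 0 v x).toNNReal :=
    (measurable_gaussianPDFReal 0 v).real_toNNReal
  have : (volume : Measure ℝ).withDensity (gaussianPDF 0 v)
      = (volume : Measure ℝ).withDensity (fun x => ((gaussianPDFReal 0 v x).toNNReal : ℝ≥0∞)) := rfl
  rw [this, integrable_withDensity_iff_integrable_smul hmeas]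
  have h := ((int_pow_gauss hb p).const_mul (√(2 * π * v))⁻¹)
  refine h.congr ?_
  filter_upwards with x
  rw [NNReal.smul_def, Real.coe_toNNReal _ (gaussianPDFReal_nonneg 0 v x), pdf_eq, smul_eq_mul]
  ring
lemma gauss_moments {v : ℝ≥0} (hv : v ≠ 0) :
    (∫ x, x ^ 2 ∂(gaussianReal 0 v)) = (v:ℝ)
      ∧ (∫ x, x ^ 4 ∂(gaussianReal 0 v)) = 3 * (v:ℝ) ^ 2 := by
  have hv0 : (0:ℝ) < v := lt_of_le_of_ne v.coe_nonneg (by exact_mod_cast Ne.symm hv)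
  set b : ℝ := (2 * (v:ℝ))⁻¹ with hbdef
  have hb : (0:ℝ) < b := by positivity
  set c : ℝ := (√(2 * π * v))⁻¹ with hcdef
  set I0 : ℝ := ∫ x : ℝ, rexp (-b * x ^ 2) with hI0
  set I2 : ℝ := ∫ x : ℝ, x ^ 2 * rexp (-b * x ^ 2) with hI2
  set I4 : ℝ := ∫ x : ℝ, x ^ 4 * rexp (-b * x ^ 2) with hI4
  have h2b : 2 * b = (v:ℝ)⁻¹ := by
    rw [hbdef]; field_simp
  have hone : c * I0 = 1 := by
    have h := integral_gaussianPDFReal_eq_one 0 hv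
    simp_rw [pdf_eq] at h
    rw [hI0, ← MeasureTheory.integral_const_mul]
    exact h
  have h0 : 2 * b * I2 = I0 := by
    have h := gauss_rec hb 0
    norm_num [← neg_mul] at h
    exact h
  have h2 : 2 * b * I4 = 3 * I2 := by
    have h := gauss_rec hb 2
    norm_num [← neg_mul] at h
    exact h
  have hI2v : I2 = (v:ℝ) * I0 := by
    rw [h2b] at h0
    field_simp at h0
    linarith
  have hI4v : I4 = 3 * (v:ℝ) * I2 := by
    rw [h2b] at h2
    field_simp at h2
    linarith
  have hE2 : (∫ x, x ^ 2 ∂(gaussianReal 0 v)) = c * I2 := by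
    rw [integral_gaussianReal_eq hv]
    have hpt : ∀ x : ℝ, gaussianPDFReal 0 v x * x ^ 2 = c * (x ^ 2 * rexp (-b * x ^ 2)) :=
      fun x => by rw [pdf_eq]; ring
    simp_rw [hpt]
    rw [MeasureTheory.integral_const_mul]
  have hE4 : (∫ x, x ^ 4 ∂(gaussianReal 0 v)) = c * I4 := by
    rw [integral_gaussianReal_eq hv]
    have hpt : ∀ x : ℝ, gaussianPDFReal 0 v x * x ^ 4 = c * (x ^ 4 * rexp (-b * x ^ 2)) :=
      fun x => by rw [pdf_eq]; ring
    simp_rw [hpt]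
    rw [MeasureTheory.integral_const_mul]
  constructor
  · rw [hE2, hI2v]
    calc c * ((v:ℝ) * I0) = (v:ℝ) * (c * I0) := by ring
    _ = (v:ℝ) := by rw [hone, mul_one]
  · rw [hE4, hI4v, hI2v]
    calc c * (3 * (v:ℝ) * ((v:ℝ) * I0)) = 3 * (v:ℝ)^2 * (c * I0) := by ring
    _ = 3 * (v:ℝ)^2 := by rw [hone, mul_one]
lemma gauss_m2 (v : ℝ≥0) : (∫ x, x ^ 2 ∂(gaussianReal 0 v)) = (v:ℝ) := by
  by_cases hv : v = 0
  · rw [hv, gaussianReal_zero_var]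
    simp [MeasureTheory.integral_dirac]
  · exact (gauss_moments hv).1

lemma gauss_m4 (v : ℝ≥0) : (∫ x, x ^ 4 ∂(gaussianReal 0 v)) = 3 * (v:ℝ) ^ 2 := by
  by_cases hv : v = 0
  · rw [hv, gaussianReal_zero_var]
    simp [MeasureTheory.integral_dirac]
  · exact (gauss_moments hv).2

lemma var_sq_of_map_gaussian {Ω : Type} [MeasurableSpace Ω] (μ : Measure Ω)
    [IsProbabilityMeasure μ] (Z : Ω → ℝ) (hZ : Measurable Z) (v : ℝ≥0)
    (hmap : μ.map Z = gaussianReal 0 v) :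
    variance (fun ω => Z ω ^ 2) μ = 2 * (v:ℝ) ^ 2 := by
  have hZae : AEMeasurable Z μ := hZ.aemeasurable
  have hm4 : AEStronglyMeasurable (fun x : ℝ => x ^ 4) (μ.map Z) :=
    (measurable_id.pow_const 4).aestronglyMeasurable
  have hm2 : AEStronglyMeasurable (fun x : ℝ => x ^ 2) (μ.map Z) :=
    (measurable_id.pow_const 2).aestronglyMeasurable
  have hint4 : Integrable (fun ω => Z ω ^ 4) μ := by
    have h := integrable_pow_gaussianReal v 4
    rw [← hmap] at h
    exact (integrable_map_measure hm4 hZae).mp h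
  have hmem : MeasureTheory.MemLp (fun ω => Z ω ^ 2) 2 μ := by
    refine (memLp_two_iff_integrable_sq ((hZ.pow_const 2).aestronglyMeasurable)).mpr ?_
    refine hint4.congr ?_
    filter_upwards with ω
    ring
  have e4 : (∫ ω, (Z ω ^ 2) ^ 2 ∂μ) = 3 * (v:ℝ) ^ 2 := by
    have h : (∫ ω, Z ω ^ 4 ∂μ) = ∫ x, x ^ 4 ∂(μ.map Z) := (integral_map hZae hm4).symm
    rw [hmap, gauss_m4] at h
    rw [← h]
    apply integral_congr_ae
    filter_upwards with ω
    ring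
  have e2 : (∫ ω, Z ω ^ 2 ∂μ) = (v:ℝ) := by
    have h : (∫ ω, Z ω ^ 2 ∂μ) = ∫ x, x ^ 2 ∂(μ.map Z) := (integral_map hZae hm2).symm
    rw [hmap, gauss_m2] at h
    exact h
  rw [variance_eq_sub hmem]
  simp only [Pi.pow_apply]
  rw [e4, e2]
  ring

lemma col_inj {n k l : ℕ} (F : Matrix (Fin n) (Fin k) ℝ) (V : Matrix (Fin n) (Fin l) ℝ)
    (hrank : (Matrix.fromCols F V).rank = k + l) :
    ∀ x : Fin k → ℝ, F.mulVec x = 0 → x = 0 := by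
  have hker : LinearMap.ker (Matrix.fromCols F V).mulVecLin = ⊥ := by
    have hrn := LinearMap.finrank_range_add_finrank_ker (Matrix.fromCols F V).mulVecLin
    have hdom : Module.finrank ℝ ((Fin k ⊕ Fin l) → ℝ) = k + l := by
      simp [Module.finrank_pi]
    have hr : Module.finrank ℝ (LinearMap.range (Matrix.fromCols F V).mulVecLin) = k + l :=
      hrank
    rw [hdom, hr] at hrn
    have h0 : Module.finrank ℝ (LinearMap.ker (Matrix.fromCols F V).mulVecLin) = 0 := by
      omega
    exact Submodule.finrank_eq_zero.mp h0
  have hinj := LinearMap.ker_eq_bot.mp hker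
  intro x hx
  have h := hinj (a₁ := Sum.elim x 0) (a₂ := 0)
  have h2 : (Matrix.fromCols F V).mulVecLin (Sum.elim x (0 : Fin l → ℝ)) = 0 := by
    simp [Matrix.mulVecLin_apply, hx]
  have := h (by rw [h2]; simp)
  have := congrFun this
  funext i
  simpa using this (Sum.inl i)

lemma FtF_unit {n k l : ℕ} (F : Matrix (Fin n) (Fin k) ℝ) (V : Matrix (Fin n) (Fin l) ℝ)
    (hrank : (Matrix.fromCols F V).rank = k + l) :
    IsUnit (Fᵀ * F).det := by
  have hcol := col_inj F V hrank
  have hpd : (Fᵀ * F).PosDef := by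
    refine Matrix.PosDef.of_dotProduct_mulVec_pos ?_ ?_
    · rw [Matrix.IsHermitian, Matrix.conjTranspose_eq_transpose_of_trivial, Matrix.transpose_mul,
        Matrix.transpose_transpose]
    · intro x hx
      have hFx : F.mulVec x ≠ 0 := fun h => hx (hcol x h)
      have : star x ⬝ᵥ (Fᵀ * F) *ᵥ x = (F *ᵥ x) ⬝ᵥ (F *ᵥ x) := by
        rw [← Matrix.mulVec_mulVec, Matrix.dotProduct_mulVec]
        simp [Matrix.vecMul_transpose]
      rw [this]
      have := Matrix.dotProduct_star_self_pos_iff (R := ℝ) (v := F *ᵥ x)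
      simpa using this.mpr hFx
  exact hpd.det_pos.ne'.isUnit

lemma matrix_facts {n k l : ℕ}
    (F : Matrix (Fin n) (Fin k) ℝ) (V : Matrix (Fin n) (Fin l) ℝ)
    (hFtF : IsUnit (Fᵀ * F).det)
    (σ0 : ℝ) (hσ0 : 0 < σ0)
    (σ : Fin l → ℝ) (hσ : ∀ j, 0 < σ j)
    (D : Matrix (Fin l) (Fin l) ℝ) (hD : D = Matrix.diagonal σ)
    (Mf : Matrix (Fin n) (Fin n) ℝ) (hMf : Mf = 1 - F * (Fᵀ * F)⁻¹ * Fᵀ)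
    (What : Matrix (Fin l) (Fin l) ℝ) (hWhat : What = Vᵀ * Mf * V + σ0 • D⁻¹)
    (That : Matrix (Fin l) (Fin n) ℝ) (hThat : That = What⁻¹ * Vᵀ * Mf)
    (Sigma : Matrix (Fin n) (Fin n) ℝ)
    (hSigma : Sigma = σ0 • (1 : Matrix (Fin n) (Fin n) ℝ) + V * D * Vᵀ) :
    That * F = 0 ∧ That * Sigma * Thatᵀ = D - σ0 • What⁻¹ := by
  -- D facts
  have hDdet : IsUnit D.det := by
    rw [hD, Matrix.det_diagonal]
    exact (Finset.prod_pos (fun i _ => hσ i)).ne'.isUnit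
  have hDD : D * D⁻¹ = 1 := Matrix.mul_nonsing_inv _ hDdet
  have hDD' : D⁻¹ * D = 1 := Matrix.nonsing_inv_mul _ hDdet
  have hDinvt : D⁻¹ᵀ = D⁻¹ := by
    rw [Matrix.transpose_nonsing_inv, hD, Matrix.diagonal_transpose]
  -- F facts
  have hFc : (Fᵀ * F)⁻¹ * (Fᵀ * F) = 1 := Matrix.nonsing_inv_mul _ hFtF
  have hPF : F * (Fᵀ * F)⁻¹ * Fᵀ * F = F := by
    rw [Matrix.mul_assoc (F * (Fᵀ * F)⁻¹) Fᵀ F, Matrix.mul_assoc F (Fᵀ * F)⁻¹ (Fᵀ * F), hFc,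
      Matrix.mul_one]
  have hMfF : Mf * F = 0 := by
    rw [hMf, Matrix.sub_mul, Matrix.one_mul, hPF, sub_self]
  have hFtFt : (Fᵀ * F)ᵀ = Fᵀ * F := by
    rw [Matrix.transpose_mul, Matrix.transpose_transpose]
  have hMft : Mfᵀ = Mf := by
    rw [hMf, Matrix.transpose_sub, Matrix.transpose_one]
    congr 1
    rw [Matrix.transpose_mul, Matrix.transpose_mul, Matrix.transpose_transpose,
      Matrix.transpose_nonsing_inv, hFtFt, Matrix.mul_assoc]
  have hMf2 : Mf * Mf = Mf := by
    have hPP : F * (Fᵀ * F)⁻¹ * Fᵀ * (F * (Fᵀ * F)⁻¹ * Fᵀ) = F * (Fᵀ * F)⁻¹ * Fᵀ := by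
      rw [← Matrix.mul_assoc (F * (Fᵀ * F)⁻¹ * Fᵀ) (F * (Fᵀ * F)⁻¹) Fᵀ,
        ← Matrix.mul_assoc (F * (Fᵀ * F)⁻¹ * Fᵀ) F (Fᵀ * F)⁻¹, hPF]
    rw [hMf]
    simp only [Matrix.sub_mul, Matrix.mul_sub, Matrix.one_mul, Matrix.mul_one, hPP]
    abel
  -- What facts
  have hAt : (Vᵀ * Mf * V)ᵀ = Vᵀ * Mf * V := by
    rw [Matrix.transpose_mul, Matrix.transpose_mul, Matrix.transpose_transpose, hMft,
      Matrix.mul_assoc]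
  have hApsd : (Vᵀ * Mf * V).PosSemidef := by
    have h := Matrix.posSemidef_conjTranspose_mul_self (Mf * V)
    have he : (Mf * V)ᴴ * (Mf * V) = Vᵀ * Mf * V := by
      rw [Matrix.conjTranspose_eq_transpose_of_trivial, Matrix.transpose_mul, hMft,
        Matrix.mul_assoc Vᵀ Mf (Mf * V), ← Matrix.mul_assoc Mf Mf V, hMf2, Matrix.mul_assoc]
    rwa [he] at h
  have hDinvPD : (σ0 • D⁻¹ : Matrix (Fin l) (Fin l) ℝ).PosDef := by
    have hDinv : D⁻¹ = Matrix.diagonal (fun i => (σ i)⁻¹) := by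
      apply Matrix.inv_eq_right_inv
      rw [hD, Matrix.diagonal_mul_diagonal,
        show (fun i => σ i * (σ i)⁻¹) = fun _ => (1:ℝ) from funext fun i => mul_inv_cancel₀ (hσ i).ne']
      exact Matrix.diagonal_one
    have hsd : σ0 • Matrix.diagonal (fun i => (σ i)⁻¹)
        = Matrix.diagonal (fun i => σ0 * (σ i)⁻¹) := by
      ext i j
      rcases eq_or_ne i j with h | h <;> simp [Matrix.diagonal_apply, h]
    rw [hDinv, hsd]
    exact Matrix.PosDef.diagonal (fun i => by have := hσ i; positivity)
  have hWpd : What.PosDef := by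
    rw [hWhat]
    exact Matrix.PosDef.posSemidef_add hApsd hDinvPD
  have hWdet : IsUnit What.det := hWpd.det_pos.ne'.isUnit
  have hWW : What * What⁻¹ = 1 := Matrix.mul_nonsing_inv _ hWdet
  have hWW' : What⁻¹ * What = 1 := Matrix.nonsing_inv_mul _ hWdet
  have hWt : Whatᵀ = What := by
    rw [hWhat, Matrix.transpose_add, hAt, Matrix.transpose_smul, hDinvt]
  have hWinvt : What⁻¹ᵀ = What⁻¹ := by rw [Matrix.transpose_nonsing_inv, hWt]
  -- first claim
  have hTF : That * F = 0 := by
    rw [hThat, Matrix.mul_assoc, hMfF, Matrix.mul_zero]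
  refine ⟨hTF, ?_⟩
  -- main computation
  have hThatT : Thatᵀ = Mf * V * What⁻¹ := by
    rw [hThat, Matrix.transpose_mul, Matrix.transpose_mul, hMft, hWinvt,
      Matrix.transpose_transpose, Matrix.mul_assoc]
  have hThatMf : That * Mf = That := by
    rw [hThat, Matrix.mul_assoc (What⁻¹ * Vᵀ) Mf Mf, hMf2]
  have hTV : That * V = What⁻¹ * (Vᵀ * Mf * V) := by
    rw [hThat, Matrix.mul_assoc What⁻¹ Vᵀ Mf, Matrix.mul_assoc What⁻¹ (Vᵀ * Mf) V,
      Matrix.mul_assoc Vᵀ Mf V]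
  set A : Matrix (Fin l) (Fin l) ℝ := Vᵀ * Mf * V with hA
  have hAW : A = What - σ0 • D⁻¹ := by rw [hWhat]; abel
  have hTMV : That * (Mf * V) = What⁻¹ * A := by
    rw [← Matrix.mul_assoc That Mf V, hThatMf, hTV]
  have step1 : That * Sigma = σ0 • That + What⁻¹ * A * (D * Vᵀ) := by
    rw [hSigma, Matrix.mul_add, Matrix.mul_smul, Matrix.mul_one, Matrix.mul_assoc V D Vᵀ,
      ← Matrix.mul_assoc That V (D * Vᵀ), hTV]
  have step2 : That * Sigma * Thatᵀ
      = σ0 • (What⁻¹ * A * What⁻¹) + What⁻¹ * A * (D * (A * What⁻¹)) := by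
    rw [step1, hThatT, Matrix.add_mul, Matrix.smul_mul]
    congr 1
    · rw [← Matrix.mul_assoc That (Mf * V) What⁻¹, hTMV, Matrix.mul_assoc What⁻¹ A What⁻¹]
    · rw [Matrix.mul_assoc (What⁻¹ * A) (D * Vᵀ) (Mf * V * What⁻¹)]
      congr 1
      rw [Matrix.mul_assoc D Vᵀ (Mf * V * What⁻¹), ← Matrix.mul_assoc Vᵀ (Mf * V) What⁻¹,
        ← Matrix.mul_assoc Vᵀ Mf V]
  have key : (σ0 • (1 : Matrix (Fin l) (Fin l) ℝ) + D * A) = D * What := by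
    rw [hAW, Matrix.mul_sub, Matrix.mul_smul, hDD]
    abel
  have step3 : That * Sigma * Thatᵀ = What⁻¹ * A * ((σ0 • 1 + D * A) * What⁻¹) := by
    rw [step2, Matrix.add_mul, Matrix.smul_mul, Matrix.one_mul, Matrix.mul_add,
      Matrix.mul_smul, ← Matrix.mul_assoc D A What⁻¹]
  rw [step3, key, Matrix.mul_assoc D What What⁻¹, hWW, Matrix.mul_one, hAW,
    Matrix.mul_sub, Matrix.sub_mul, hWW', Matrix.one_mul, Matrix.mul_smul, Matrix.smul_mul,
    Matrix.mul_assoc What⁻¹ D⁻¹ D, hDD', Matrix.mul_one]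

lemma quad_entry {l n : ℕ} (T : Matrix (Fin l) (Fin n) ℝ) (S : Matrix (Fin n) (Fin n) ℝ)
    (j : Fin l) :
    ∑ i, ∑ i', T j i * S i i' * T j i' = (T * S * Tᵀ) j j := by
  simp only [Matrix.mul_apply, Matrix.transpose_apply, Finset.sum_mul]
  rw [Finset.sum_comm]

/-- Variance of the BLUP natural estimator under Gaussianity:
if `X ~ N_n(Fβ, Σ)` with `Σ = σ₀²I_n + VDV'` (multivariate normality expressed
via one-dimensional marginals of all linear functionals), then
`Var[((T̂X)ⱼ)²] = 2(σⱼ² − σ₀²(Ŵ⁻¹)ⱼⱼ)²`. -/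
theorem stmt_8 {n k l : ℕ} (hn : 0 < n) (hk : 0 < k) (hl : 0 < l)
    (hnkl : k + l < n)
    (F : Matrix (Fin n) (Fin k) ℝ) (V : Matrix (Fin n) (Fin l) ℝ)
    (hrank : (Matrix.fromCols F V).rank = k + l)
    (σ0 : ℝ) (hσ0 : 0 < σ0)
    (σ : Fin l → ℝ) (hσ : ∀ j, 0 < σ j)
    (D : Matrix (Fin l) (Fin l) ℝ) (hD : D = Matrix.diagonal σ)
    (Mf : Matrix (Fin n) (Fin n) ℝ) (hMf : Mf = 1 - F * (Fᵀ * F)⁻¹ * Fᵀ)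
    (What : Matrix (Fin l) (Fin l) ℝ) (hWhat : What = Vᵀ * Mf * V + σ0 • D⁻¹)
    (That : Matrix (Fin l) (Fin n) ℝ) (hThat : That = What⁻¹ * Vᵀ * Mf)
    (Sigma : Matrix (Fin n) (Fin n) ℝ)
    (hSigma : Sigma = σ0 • (1 : Matrix (Fin n) (Fin n) ℝ) + V * D * Vᵀ)
    (Ω : Type) [MeasurableSpace Ω] (μ : Measure Ω) [IsProbabilityMeasure μ]
    (X : Ω → Fin n → ℝ) (hXmeas : ∀ i, Measurable fun ω => X ω i)
    (β : Fin k → ℝ)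
    (hgauss : ∀ t : Fin n → ℝ,
      μ.map (fun ω => ∑ i, t i * X ω i) =
        gaussianReal (∑ i, t i * F.mulVec β i)
          (Real.toNNReal (∑ i, ∑ i', t i * Sigma i i' * t i'))) :
    ∀ j : Fin l,
      variance (fun ω => (That.mulVec (X ω) j) ^ 2) μ
        = 2 * (σ j - σ0 * What⁻¹ j j) ^ 2 := by
  obtain ⟨hTF, hTS⟩ := matrix_facts F V (FtF_unit F V hrank) σ0 hσ0 σ hσ D hD Mf hMf
    What hWhat That hThat Sigma hSigma
  -- Sigma is positive semidefinite
  have hSpsd : Sigma.PosSemidef := by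
    rw [hSigma]
    apply Matrix.PosSemidef.add
    · have h1 : σ0 • (1 : Matrix (Fin n) (Fin n) ℝ) = Matrix.diagonal (fun _ => σ0) := by
        ext i j
        rcases eq_or_ne i j with h | h <;> simp [Matrix.diagonal_apply, h]
      rw [h1]
      exact Matrix.posSemidef_diagonal_iff.mpr fun i => hσ0.le
    · have hDpsd : D.PosSemidef := by
        rw [hD]
        exact Matrix.posSemidef_diagonal_iff.mpr fun i => (hσ i).le
      have h := hDpsd.mul_mul_conjTranspose_same V
      rwa [Matrix.conjTranspose_eq_transpose_of_trivial] at h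
  intro j
  set t : Fin n → ℝ := fun i => That j i with ht
  set q : ℝ := ∑ i, ∑ i', t i * Sigma i i' * t i' with hqdef
  have hq : q = σ j - σ0 * What⁻¹ j j := by
    rw [hqdef, quad_entry That Sigma j, hTS]
    simp [Matrix.sub_apply, Matrix.smul_apply, hD, Matrix.diagonal_apply_eq, smul_eq_mul]
  have hq0 : 0 ≤ q := by
    have h := hSpsd.dotProduct_mulVec_nonneg t
    have he : star t ⬝ᵥ Sigma *ᵥ t = q := by
      simp [dotProduct, Matrix.mulVec, Finset.mul_sum, mul_assoc, hqdef]
    rwa [he] at h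
  have hmean : (∑ i, t i * F.mulVec β i) = 0 := by
    have : (∑ i, t i * F.mulVec β i) = ((That * F).mulVec β) j := by
      simp only [Matrix.mulVec, dotProduct, Matrix.mul_apply, Finset.sum_mul]
      rw [Finset.sum_comm]
      refine Finset.sum_congr rfl fun i _ => ?_
      rw [Finset.mul_sum]
      exact Finset.sum_congr rfl fun c _ => by ring
    rw [this, hTF]
    simp [Matrix.mulVec]
  have hZmeas : Measurable (fun ω => ∑ i, t i * X ω i) :=
    Finset.measurable_sum _ fun i _ => (hXmeas i).const_mul _
  have hmap : μ.map (fun ω => ∑ i, t i * X ω i) = gaussianReal 0 (Real.toNNReal q) := by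
    rw [hgauss t, hmean]
  have hvar := var_sq_of_map_gaussian μ (fun ω => ∑ i, t i * X ω i) hZmeas _ hmap
  have hfun : (fun ω => (That.mulVec (X ω) j) ^ 2) = fun ω => (∑ i, t i * X ω i) ^ 2 := by
    funext ω
    rfl
  rw [hfun, hvar, Real.coe_toNNReal q hq0, hq]
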